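/- There exists ζ₀ > 0 and a unique C¹ (indeed analytic) function ψ : [0, ζ₀) → ℝ with ψ(0) = 1 solving the singular first-order ODE dψ/dζ = (2(1-ψ) + ζψ²)/(ζ(1 - ζψ)) on (0, ζ₀); moreover ψ(ζ) = 1 + ζ/3 + o(ζ) as ζ → 0⁺. -/

import Mathlib

open Set Filter

section UnstableManifoldODE

open MeasureTheory intervalIntegral
open scoped NNReal

noncomputable section ODEconstruction

/-- the nonlinearity -/
def gg (s y : ℝ) : ℝ := y * (2 - y) / (1 - s * y)

lemma denom_half {s y : ℝ} (hs : s ≤ 1/100) (hy : |y - 1| ≤ 1/2) :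
    (1:ℝ)/2 ≤ 1 - s * y := by
  obtain ⟨h1, h2⟩ := abs_le.1 hy
  nlinarith [mul_nonneg (by linarith : (0:ℝ) ≤ 1/100 - s) (by linarith : (0:ℝ) ≤ y)]

lemma denom_pos {s y : ℝ} (hs : s < 2/3) (hy : |y - 1| ≤ 1/2) :
    (0:ℝ) < 1 - s * y := by
  obtain ⟨h1, h2⟩ := abs_le.1 hy
  nlinarith [mul_nonneg (by linarith : (0:ℝ) ≤ 2/3 - s) (by linarith : (0:ℝ) ≤ y)]

lemma gg_bound {s y : ℝ} (hs : s ≤ 1/100) (hy : |y - 1| ≤ 1/2) : |gg s y| ≤ 2 := by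
  obtain ⟨h1, h2⟩ := abs_le.1 hy
  have hd := denom_half hs hy
  rw [gg, abs_div, abs_of_pos (by linarith : (0:ℝ) < 1 - s*y), div_le_iff₀ (by linarith)]
  have h3 : |y * (2 - y)| ≤ 1 := by
    rw [abs_le]; constructor <;> nlinarith [sq_nonneg (y-1)]
  nlinarith [abs_nonneg (y * (2 - y))]

lemma gg_lip {s y y' : ℝ} (hs0 : 0 ≤ s) (hs : s ≤ 1/100)
    (hy : |y - 1| ≤ 1/2) (hy' : |y' - 1| ≤ 1/2) :
    |gg s y - gg s y'| ≤ 8 * |y - y'| := by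
  obtain ⟨h1, h2⟩ := abs_le.1 hy
  obtain ⟨h1', h2'⟩ := abs_le.1 hy'
  have hd := denom_half hs hy
  have hd' := denom_half hs hy'
  have key : gg s y - gg s y' =
      ((y - y') * ((2 - y - y') + s * y * y')) / ((1 - s*y) * (1 - s*y')) := by
    rw [gg, gg, div_sub_div _ _ (by linarith : (0:ℝ) < 1 - s*y).ne' (by linarith : (0:ℝ) < 1 - s*y').ne']
    congr 1
    ring
  rw [key, abs_div, abs_mul]
  have hf : |(2 - y - y') + s * y * y'| ≤ 2 := by
    rw [abs_le]
    constructor <;> nlinarith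
  have hdd : (1:ℝ)/4 ≤ (1 - s*y) * (1 - s*y') := by nlinarith
  rw [abs_of_pos (by linarith : (0:ℝ) < (1 - s*y) * (1 - s*y')), div_le_iff₀ (by linarith)]
  nlinarith [abs_nonneg (y - y')]


lemma G_contAt {φ : ℝ → ℝ} (hφ : Continuous φ) (hb : ∀ s, |φ s - 1| ≤ 1/2)
    {x : ℝ} (hx : x < 2/3) :
    ContinuousAt (fun s => s^2 * gg s (φ s)) x := by
  have hd : (1 : ℝ) - x * φ x ≠ 0 := ne_of_gt (denom_pos hx (hb x))
  have h1 : ContinuousAt (fun s => gg s (φ s)) x := by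
    simp only [gg]
    exact ContinuousAt.div
      ((hφ.continuousAt).mul (by fun_prop))
      (continuousAt_const.sub (continuousAt_id.mul hφ.continuousAt)) hd
  exact ((continuous_pow 2).continuousAt).mul h1

lemma G_contOn {φ : ℝ → ℝ} {b : ℝ} (hφ : ContinuousOn φ (Icc 0 b))
    (hb : ∀ s ∈ Icc 0 b, |φ s - 1| ≤ 1/2) (hbc : b ≤ 1/100) :
    ContinuousOn (fun s => s^2 * gg s (φ s)) (Icc 0 b) := by
  apply ContinuousOn.mul (by fun_prop)
  simp only [gg]
  apply ContinuousOn.div (hφ.mul (continuousOn_const.sub hφ))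
    (continuousOn_const.sub (continuousOn_id.mul hφ))
  intro s hs
  exact ne_of_gt (lt_of_lt_of_le (by norm_num)
    (denom_half (le_trans hs.2 hbc) (hb s hs)))

/-- FTC for the primitive of the integrand, for globally defined φ. -/
lemma F_hasDeriv {φ : ℝ → ℝ} (hφ : Continuous φ) (hb : ∀ s, |φ s - 1| ≤ 1/2)
    {x : ℝ} (hx : x < 2/3) :
    HasDerivAt (fun ζ => ∫ s in (0:ℝ)..ζ, s^2 * gg s (φ s)) (x^2 * gg x (φ x)) x := by
  have hco : ContinuousOn (fun s => s^2 * gg s (φ s)) (Iio (2/3)) :=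
    continuousOn_of_forall_continuousAt fun y hy => G_contAt hφ hb hy
  have hint : IntervalIntegrable (fun s => s^2 * gg s (φ s)) volume 0 x := by
    apply ContinuousOn.intervalIntegrable
    apply hco.mono
    intro y hy
    rcases le_total 0 x with h | h
    · rw [uIcc_of_le h] at hy; exact lt_of_le_of_lt hy.2 hx
    · rw [uIcc_of_ge h] at hy; exact lt_of_le_of_lt hy.2 (by norm_num)
  exact integral_hasDerivAt_right hint
    (ContinuousOn.stronglyMeasurableAtFilter isOpen_Iio hco x hx)
    (G_contAt hφ hb hx)

/-- Bound on the primitive. -/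
lemma F_bound {φ : ℝ → ℝ} (hb : ∀ s, |φ s - 1| ≤ 1/2) {ζ : ℝ}
    (h0 : 0 ≤ ζ) (h1 : ζ ≤ 1/100) :
    |∫ s in (0:ℝ)..ζ, s^2 * gg s (φ s)| ≤ 2 * ζ^2 * ζ := by
  have := intervalIntegral.norm_integral_le_of_norm_le_const
    (C := 2 * ζ^2) (f := fun s => s^2 * gg s (φ s)) (a := 0) (b := ζ) ?_
  · simpa [abs_of_nonneg h0] using this
  · intro x hx
    rw [uIoc_of_le h0] at hx
    have hx0 : 0 < x := hx.1
    have hxζ : x ≤ ζ := hx.2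
    have h2 : |gg x (φ x)| ≤ 2 := gg_bound (le_trans hxζ h1) (hb x)
    rw [Real.norm_eq_abs, abs_mul, abs_of_nonneg (sq_nonneg x)]
    nlinarith [sq_nonneg x, abs_nonneg (gg x (φ x)), sq_nonneg ζ,
      mul_le_mul_of_nonneg_left h2 (sq_nonneg x),
      mul_le_mul_of_nonneg_right (by nlinarith : x^2 ≤ ζ^2) (abs_nonneg (gg x (φ x)))]

/-- Lipschitz-type bound for difference of primitives. -/
lemma F_diff_bound {φ φ' : ℝ → ℝ} (hφ : Continuous φ) (hφ' : Continuous φ')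
    (hb : ∀ s, |φ s - 1| ≤ 1/2) (hb' : ∀ s, |φ' s - 1| ≤ 1/2)
    {D : ℝ} (hD : ∀ s ∈ Icc (0:ℝ) (1/100), |φ s - φ' s| ≤ D) {ζ : ℝ}
    (h0 : 0 ≤ ζ) (h1 : ζ ≤ 1/100) :
    |(∫ s in (0:ℝ)..ζ, s^2 * gg s (φ s)) - ∫ s in (0:ℝ)..ζ, s^2 * gg s (φ' s)|
      ≤ 8 * ζ^2 * D * ζ := by
  have hco : ContinuousOn (fun s => s^2 * gg s (φ s)) (Iio (2/3)) :=
    continuousOn_of_forall_continuousAt fun y hy => G_contAt hφ hb hy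
  have hco' : ContinuousOn (fun s => s^2 * gg s (φ' s)) (Iio (2/3)) :=
    continuousOn_of_forall_continuousAt fun y hy => G_contAt hφ' hb' hy
  have hsub : uIcc (0:ℝ) ζ ⊆ Iio (2/3) := by
    rw [uIcc_of_le h0]; exact fun y hy => lt_of_le_of_lt hy.2 (by linarith)
  have hint : IntervalIntegrable (fun s => s^2 * gg s (φ s)) volume 0 ζ :=
    (hco.mono hsub).intervalIntegrable
  have hint' : IntervalIntegrable (fun s => s^2 * gg s (φ' s)) volume 0 ζ :=
    (hco'.mono hsub).intervalIntegrable
  rw [← intervalIntegral.integral_sub hint hint']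
  have := intervalIntegral.norm_integral_le_of_norm_le_const
    (C := 8 * ζ^2 * D) (f := fun s => s^2 * gg s (φ s) - s^2 * gg s (φ' s)) (a := 0) (b := ζ) ?_
  · simpa [abs_of_nonneg h0] using this
  · intro x hx
    rw [uIoc_of_le h0] at hx
    have hx0 : (0:ℝ) ≤ x := hx.1.le
    have hxζ : x ≤ ζ := hx.2
    have hl : |gg x (φ x) - gg x (φ' x)| ≤ 8 * |φ x - φ' x| :=
      gg_lip hx0 (le_trans hxζ h1) (hb x) (hb' x)
    have hDx : |φ x - φ' x| ≤ D := hD x ⟨hx0, le_trans hxζ h1⟩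
    have hD0 : 0 ≤ D := le_trans (abs_nonneg _) hDx
    have hx2 : x^2 ≤ ζ^2 := by nlinarith
    calc ‖x^2 * gg x (φ x) - x^2 * gg x (φ' x)‖
        = x^2 * |gg x (φ x) - gg x (φ' x)| := by
          rw [Real.norm_eq_abs, ← mul_sub, abs_mul, abs_of_nonneg (sq_nonneg x)]
      _ ≤ ζ^2 * (8 * D) := by
          apply mul_le_mul hx2 (le_trans hl (by linarith)) (abs_nonneg _) (sq_nonneg ζ)
      _ = 8 * ζ^2 * D := by ring

abbrev Dom : Set ℝ := Icc (0:ℝ) (1/100)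

def extf (f : C(Dom, ℝ)) : ℝ → ℝ := fun s => f (Set.projIcc 0 (1/100) (by norm_num) s)

lemma extf_cont (f : C(Dom, ℝ)) : Continuous (extf f) :=
  (map_continuous f).comp continuous_projIcc

def PP : Set C(Dom, ℝ) := {f | ∀ x, |f x - 1| ≤ 1/2}

lemma extf_ball {f : C(Dom, ℝ)} (hf : f ∈ PP) : ∀ s, |extf f s - 1| ≤ 1/2 := fun _ => hf _

lemma extf_eq {f : C(Dom, ℝ)} {ζ : ℝ} (hζ : ζ ∈ Dom) : extf f ζ = f ⟨ζ, hζ⟩ := by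
  rw [extf, Set.projIcc_of_mem]

def Tfun (f : C(Dom, ℝ)) : ℝ → ℝ :=
  fun ζ => 1 + (∫ s in (0:ℝ)..ζ, s^2 * gg s (extf f s)) / ζ^2

lemma Tfun_zero (f : C(Dom, ℝ)) : Tfun f 0 = 1 := by
  simp [Tfun]

lemma Tfun_bound {f : C(Dom, ℝ)} (hf : f ∈ PP) {ζ : ℝ} (hζ : ζ ∈ Dom) :
    |Tfun f ζ - 1| ≤ 2 * ζ := by
  rcases eq_or_lt_of_le hζ.1 with h | h
  · simp [← h, Tfun]
  · have hF := F_bound (extf_ball hf) hζ.1 hζ.2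
    rw [Tfun, add_sub_cancel_left, abs_div, abs_of_nonneg (sq_nonneg ζ)]
    rw [div_le_iff₀ (by positivity)]
    nlinarith

lemma Tfun_contOn {f : C(Dom, ℝ)} (hf : f ∈ PP) : ContinuousOn (Tfun f) Dom := by
  intro x hx
  rcases eq_or_lt_of_le hx.1 with h | h
  · -- continuity at 0
    subst h
    rw [ContinuousWithinAt, Tfun_zero]
    have hup : Tendsto (fun ζ : ℝ => 1 + 2*ζ) (nhdsWithin 0 Dom) (nhds 1) := by
      have : Tendsto (fun ζ : ℝ => 1 + 2*ζ) (nhds 0) (nhds (1 + 2*0)) :=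
        (Continuous.tendsto (by continuity) 0)
      simpa using this.mono_left nhdsWithin_le_nhds
    have hlo : Tendsto (fun ζ : ℝ => 1 - 2*ζ) (nhdsWithin 0 Dom) (nhds 1) := by
      have : Tendsto (fun ζ : ℝ => 1 - 2*ζ) (nhds 0) (nhds (1 - 2*0)) :=
        (Continuous.tendsto (by continuity) 0)
      simpa using this.mono_left nhdsWithin_le_nhds
    apply tendsto_of_tendsto_of_tendsto_of_le_of_le' hlo hup
    · filter_upwards [self_mem_nhdsWithin] with ζ hζ
      have := abs_le.1 (Tfun_bound hf hζ); linarith [this.1]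
    · filter_upwards [self_mem_nhdsWithin] with ζ hζ
      have := abs_le.1 (Tfun_bound hf hζ); linarith [this.2]
  · -- continuity at interior/right points, via ContinuousAt
    apply ContinuousAt.continuousWithinAt
    have hFc : ContinuousAt (fun ζ => ∫ s in (0:ℝ)..ζ, s^2 * gg s (extf f s)) x :=
      (F_hasDeriv (extf_cont f) (extf_ball hf)
        (lt_of_le_of_lt hx.2 (by norm_num))).continuousAt
    exact continuousAt_const.add (hFc.div ((continuous_pow 2).continuousAt)
      (pow_ne_zero 2 (ne_of_gt h)))

def Tmap : PP → PP := fun f =>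
  ⟨⟨Dom.restrict (Tfun f.1), (Tfun_contOn f.2).restrict⟩, by
    intro x
    have h := Tfun_bound f.2 x.2
    have hx2 : (x:ℝ) ≤ 1/100 := x.2.2
    show |Tfun f.1 (x:ℝ) - 1| ≤ 1/2
    calc |Tfun f.1 x - 1| ≤ 2 * (x:ℝ) := h
      _ ≤ 1/2 := by linarith⟩

lemma Tmap_lip : ∀ f f' : PP, dist (Tmap f) (Tmap f') ≤ (2/25 : ℝ) * dist f f' := by
  intro f f'
  have hDd : 0 ≤ dist f f' := dist_nonneg
  rw [Subtype.dist_eq, ContinuousMap.dist_le (by positivity)]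
  intro x
  have hD : ∀ s ∈ Icc (0:ℝ) (1/100), |extf f.1 s - extf f'.1 s| ≤ dist f f' := by
    intro s hs
    rw [extf_eq hs, extf_eq hs]
    calc |f.1 ⟨s, hs⟩ - f'.1 ⟨s, hs⟩| = dist (f.1 ⟨s, hs⟩) (f'.1 ⟨s, hs⟩) :=
          (Real.dist_eq _ _).symm
      _ ≤ dist f.1 f'.1 := ContinuousMap.dist_apply_le_dist _
      _ = dist f f' := (Subtype.dist_eq f f').symm
  show dist (Tfun f.1 x) (Tfun f'.1 x) ≤ _
  rw [Real.dist_eq]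
  rcases eq_or_lt_of_le x.2.1 with h | h
  · have : Tfun f.1 x = Tfun f'.1 x := by rw [← h, Tfun_zero, Tfun_zero]
    rw [this]; simpa using by positivity
  · have hx1 : (x:ℝ) ≤ 1/100 := x.2.2
    have hFd := F_diff_bound (extf_cont f.1) (extf_cont f'.1)
      (extf_ball f.2) (extf_ball f'.2) hD x.2.1 hx1
    have hxpos : (0:ℝ) < (x:ℝ)^2 := by positivity
    rw [Tfun, Tfun, add_sub_add_left_eq_sub, div_sub_div_same, abs_div,
      abs_of_nonneg (sq_nonneg (x:ℝ)), div_le_iff₀ hxpos]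
    nlinarith [mul_le_mul_of_nonneg_right hx1
      (by positivity : (0:ℝ) ≤ (x:ℝ)^2 * dist f f')]

lemma PP_closed : IsClosed PP := by
  have : PP = ⋂ x : Dom, (fun f : C(Dom, ℝ) => f x) ⁻¹' (Metric.closedBall 1 (1/2)) := by
    ext f
    simp only [PP, mem_setOf_eq, mem_iInter, mem_preimage, Metric.mem_closedBall,
      Real.dist_eq]
  rw [this]
  exact isClosed_iInter fun x =>
    Metric.isClosed_closedBall.preimage (continuous_eval_const x)

theorem exists_psi : ∃ ψ : ℝ → ℝ, Continuous ψ ∧ (∀ s, |ψ s - 1| ≤ 1/2) ∧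
    ∀ ζ ∈ Icc (0:ℝ) (1/100),
      ψ ζ = 1 + (∫ s in (0:ℝ)..ζ, s^2 * gg s (ψ s)) / ζ^2 := by
  haveI : CompleteSpace PP := PP_closed.completeSpace_coe
  haveI : Nonempty PP := ⟨⟨ContinuousMap.const Dom 1, fun x => by norm_num⟩⟩
  have hK : ((2/25 : ℝ≥0) : ℝ) = 2/25 := by norm_num
  have hcontr : ContractingWith (2/25 : ℝ≥0) Tmap := by
    constructor
    · rw [← NNReal.coe_lt_coe, hK]; norm_num
    · apply LipschitzWith.of_dist_le_mul
      intro f f'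
      rw [hK]
      exact Tmap_lip f f'
  set ψ₀ : PP := ContractingWith.fixedPoint Tmap hcontr with hψ₀def
  have hfix : Tmap ψ₀ = ψ₀ := hcontr.fixedPoint_isFixedPt
  refine ⟨extf ψ₀.1, extf_cont _, extf_ball ψ₀.2, ?_⟩
  intro ζ hζ
  have h1 : extf ψ₀.1 ζ = ψ₀.1 ⟨ζ, hζ⟩ := extf_eq hζ
  have h2 : (Tmap ψ₀).1 ⟨ζ, hζ⟩ = ψ₀.1 ⟨ζ, hζ⟩ := by rw [hfix]
  have h3 : (Tmap ψ₀).1 ⟨ζ, hζ⟩ = Tfun ψ₀.1 ζ := rfl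
  rw [h1, ← h2, h3, Tfun]


section PsiProps
variable {ψ : ℝ → ℝ} (hc : Continuous ψ) (hb : ∀ s, |ψ s - 1| ≤ 1/2)
  (hid : ∀ ζ ∈ Icc (0:ℝ) (1/100),
    ψ ζ = 1 + (∫ s in (0:ℝ)..ζ, s^2 * gg s (ψ s)) / ζ^2)

section
include hid

lemma psi_zero : ψ 0 = 1 := by
  have := hid 0 (by norm_num)
  simpa using this

include hb in
lemma psi_small : ∀ ζ ∈ Icc (0:ℝ) (1/100), |ψ ζ - 1| ≤ 2 * ζ := by
  intro ζ hζ
  rw [hid ζ hζ, add_sub_cancel_left, abs_div, abs_of_nonneg (sq_nonneg ζ)]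
  rcases eq_or_lt_of_le hζ.1 with h | h
  · simp [← h]
  · rw [div_le_iff₀ (by positivity)]
    nlinarith [F_bound hb hζ.1 hζ.2]

include hc hb in
lemma psi_slope : Tendsto (fun ζ => (ψ ζ - 1)/ζ) (nhdsWithin 0 (Ioi 0)) (nhds (1/3)) := by
  rw [Metric.tendsto_nhdsWithin_nhds]
  intro ε hε
  have hq : ContinuousAt (fun s => gg s (ψ s)) 0 := by
    have h0 : (1:ℝ) - 0 * ψ 0 ≠ 0 := by norm_num
    simp only [gg]
    exact ContinuousAt.div ((hc.continuousAt).mul (by fun_prop))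
      (continuousAt_const.sub (continuousAt_id.mul hc.continuousAt)) h0
  have hq0 : gg 0 (ψ 0) = 1 := by
    rw [psi_zero hid, gg]; norm_num
  rw [Metric.continuousAt_iff] at hq
  obtain ⟨δ, hδpos, hδ⟩ := hq (ε/2) (by linarith)
  refine ⟨min δ (1/100), by positivity, ?_⟩
  intro ζ hζ hdist
  have hζ0 : 0 < ζ := hζ
  rw [Real.dist_eq, sub_zero, abs_of_pos hζ0] at hdist
  have hζδ : ζ < δ := lt_of_lt_of_le hdist (min_le_left _ _)
  have hζc : ζ ≤ 1/100 := le_of_lt (lt_of_lt_of_le hdist (min_le_right _ _))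
  have hmem : ζ ∈ Icc (0:ℝ) (1/100) := ⟨hζ0.le, hζc⟩
  -- integral identities
  have hGi : IntervalIntegrable (fun s => s^2 * gg s (ψ s)) volume 0 ζ := by
    apply ContinuousOn.intervalIntegrable
    apply continuousOn_of_forall_continuousAt
    intro y hy
    rw [uIcc_of_le hζ0.le] at hy
    exact G_contAt hc hb (by linarith [hy.2] : y < 2/3)
  have hPi : IntervalIntegrable (fun s : ℝ => s^2) volume 0 ζ := by
    apply Continuous.intervalIntegrable; continuity
  have hsq : (∫ s in (0:ℝ)..ζ, s^2) = ζ^3/3 := by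
    rw [integral_pow]; norm_num
  have key : (ψ ζ - 1)/ζ - 1/3 = (∫ s in (0:ℝ)..ζ, s^2 * (gg s (ψ s) - 1)) / ζ^3 := by
    have h1 : (∫ s in (0:ℝ)..ζ, s^2 * (gg s (ψ s) - 1))
        = (∫ s in (0:ℝ)..ζ, s^2 * gg s (ψ s)) - ζ^3/3 := by
      rw [← hsq, ← intervalIntegral.integral_sub hGi hPi]
      congr 1; ext s; ring
    rw [h1, hid ζ hmem]
    field_simp
    ring
  rw [Real.dist_eq, key]
  have hbound : |∫ s in (0:ℝ)..ζ, s^2 * (gg s (ψ s) - 1)| ≤ ζ^2 * (ε/2) * ζ := by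
    have := intervalIntegral.norm_integral_le_of_norm_le_const
      (C := ζ^2 * (ε/2)) (f := fun s => s^2 * (gg s (ψ s) - 1)) (a := 0) (b := ζ) ?_
    · simpa [abs_of_pos hζ0] using this
    · intro x hx
      rw [uIoc_of_le hζ0.le] at hx
      have hx0 : 0 < x := hx.1
      have hxζ : x ≤ ζ := hx.2
      have hgx : |gg x (ψ x) - 1| ≤ ε/2 := by
        have := hδ (x := x) (by rw [Real.dist_eq, sub_zero, abs_of_pos hx0]; linarith)
        rw [Real.dist_eq, hq0] at this
        linarith
      rw [Real.norm_eq_abs, abs_mul, abs_of_nonneg (sq_nonneg x)]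
      have hx2 : x^2 ≤ ζ^2 := by nlinarith
      exact mul_le_mul hx2 hgx (abs_nonneg _) (sq_nonneg ζ)
  rw [abs_div, abs_of_pos (by positivity : (0:ℝ) < ζ^3), div_lt_iff₀ (by positivity)]
  have h3 : ζ^2 * (ε/2) * ζ < ε * ζ^3 := by nlinarith [pow_pos hζ0 3]
  linarith

include hc hb hid in
lemma psi_ode : ∀ ζ ∈ Ioo (0:ℝ) (1/100),
    HasDerivAt ψ ((2*(1 - ψ ζ) + ζ * ψ ζ^2)/(ζ*(1 - ζ * ψ ζ))) ζ := by
  intro ζ hζ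
  have hζ0 : 0 < ζ := hζ.1
  have hζc : ζ < 1/100 := hζ.2
  have hFd := F_hasDeriv hc hb (x := ζ) (by linarith)
  have hW : HasDerivAt (fun x => 1 + (∫ s in (0:ℝ)..x, s^2 * gg s (ψ s)) / x^2)
      (((ζ^2 * gg ζ (ψ ζ)) * ζ^2 - (∫ s in (0:ℝ)..ζ, s^2 * gg s (ψ s)) * ((2:ℕ) * ζ^1))
        / (ζ^2)^2) ζ := by
    exact (hFd.div (hasDerivAt_pow 2 ζ) (pow_ne_zero 2 hζ0.ne')).const_add 1
  have hev : ψ =ᶠ[nhds ζ] (fun x => 1 + (∫ s in (0:ℝ)..x, s^2 * gg s (ψ s)) / x^2) := by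
    filter_upwards [isOpen_Ioo.mem_nhds hζ] with x hx
    exact hid x ⟨hx.1.le, hx.2.le⟩
  have hψd := hW.congr_of_eventuallyEq hev
  refine hψd.congr_deriv ?_
  have hFval : (∫ s in (0:ℝ)..ζ, s^2 * gg s (ψ s)) = (ψ ζ - 1) * ζ^2 := by
    have := hid ζ ⟨hζ0.le, hζc.le⟩
    field_simp at this ⊢
    linarith
  rw [hFval, gg]
  have hd : (1:ℝ)/2 ≤ 1 - ζ * ψ ζ := denom_half (le_of_lt hζc) (hb ζ)
  have hd0 : (1:ℝ) - ζ * ψ ζ ≠ 0 := by linarith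
  field_simp
  ring
end

end PsiProps

section PsiReg
variable {ψ : ℝ → ℝ} (hc : Continuous ψ) (hb : ∀ s, |ψ s - 1| ≤ 1/2)
  (h0 : ψ 0 = 1)
  (hslope : Tendsto (fun ζ => (ψ ζ - 1)/ζ) (nhdsWithin 0 (Ioi 0)) (nhds (1/3)))
  (hode : ∀ ζ ∈ Ioo (0:ℝ) (1/100),
    HasDerivAt ψ ((2*(1 - ψ ζ) + ζ * ψ ζ^2)/(ζ*(1 - ζ * ψ ζ))) ζ)

include h0 hslope in
lemma psi_deriv_zero : HasDerivWithinAt ψ (1/3) (Ico (0:ℝ) (1/100)) 0 := by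
  rw [hasDerivWithinAt_iff_tendsto_slope]
  have hset : Ico (0:ℝ) (1/100) \ {0} = Ioo (0:ℝ) (1/100) := by
    rw [← Ioo_insert_left (by norm_num : (0:ℝ) < 1/100)]
    simp
  rw [hset, nhdsWithin_Ioo_eq_nhdsGT (by norm_num : (0:ℝ) < 1/100)]
  apply hslope.congr'
  filter_upwards [self_mem_nhdsWithin] with x hx
  have hx0 : x ≠ 0 := ne_of_gt hx
  rw [slope_def_field, h0, sub_zero]

include hc h0 hb hslope in
lemma psi_deriv_tendsto :
    Tendsto (fun x => (2*(1 - ψ x) + x * ψ x^2)/(x*(1 - x * ψ x)))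
      (nhdsWithin 0 (Ioi 0)) (nhds (1/3)) := by
  have hpsit : Tendsto ψ (nhdsWithin 0 (Ioi 0)) (nhds 1) := by
    have := (hc.tendsto 0).mono_left (nhdsWithin_le_nhds (s := Ioi (0:ℝ)))
    rwa [h0] at this
  have hxt : Tendsto (fun x : ℝ => x) (nhdsWithin 0 (Ioi 0)) (nhds 0) :=
    tendsto_id.mono_left nhdsWithin_le_nhds
  have hnum : Tendsto (fun x => -2 * ((ψ x - 1)/x) + ψ x^2)
      (nhdsWithin 0 (Ioi 0)) (nhds (-2 * (1/3) + 1^2)) :=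
    ((hslope.const_mul (-2)).add (hpsit.pow 2))
  have hden : Tendsto (fun x => 1 - x * ψ x) (nhdsWithin 0 (Ioi 0)) (nhds (1 - 0 * 1)) :=
    tendsto_const_nhds.sub (hxt.mul hpsit)
  have hlim := hnum.div hden (by norm_num)
  have : (-2 * (1/3) + 1^2) / (1 - 0*1) = (1/3 : ℝ) := by norm_num
  rw [this] at hlim
  apply hlim.congr'
  filter_upwards [self_mem_nhdsWithin, Ioo_mem_nhdsGT
    (by norm_num : (0:ℝ) < 1/100)] with x hx hxc
  have hx0 : x ≠ 0 := ne_of_gt hx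
  have hd : (1:ℝ)/2 ≤ 1 - x * ψ x := denom_half hxc.2.le (hb x)
  have hd0 : (1:ℝ) - x * ψ x ≠ 0 := by linarith
  rw [Pi.div_apply]
  field_simp
  ring

include hc hb h0 hslope hode in
lemma psi_contDiff : ContDiffOn ℝ 1 ψ (Ico (0:ℝ) (1/100)) := by
  have hUD : UniqueDiffOn ℝ (Ico (0:ℝ) (1/100)) := uniqueDiffOn_Ico 0 (1/100)
  have hzero := psi_deriv_zero h0 hslope
  rw [show (1 : WithTop ℕ∞) = 0 + 1 from (zero_add 1).symm,
    contDiffOn_succ_iff_derivWithin hUD]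
  have hdiff : DifferentiableOn ℝ ψ (Ico (0:ℝ) (1/100)) := by
    intro x hx
    rcases eq_or_lt_of_le hx.1 with h | h
    · rw [← h]
      exact hzero.differentiableWithinAt
    · exact (hode x ⟨h, hx.2⟩).differentiableAt.differentiableWithinAt
  refine ⟨hdiff, by simp, ?_⟩
  rw [contDiffOn_zero]
  -- continuity of derivWithin
  have hd0 : derivWithin ψ (Ico (0:ℝ) (1/100)) 0 = 1/3 :=
    hzero.derivWithin (hUD 0 ⟨le_refl 0, by norm_num⟩)
  have hdx : ∀ x ∈ Ioo (0:ℝ) (1/100), derivWithin ψ (Ico (0:ℝ) (1/100)) x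
      = (2*(1 - ψ x) + x * ψ x^2)/(x*(1 - x * ψ x)) := by
    intro x hx
    rw [derivWithin_of_mem_nhds (mem_of_superset (isOpen_Ioo.mem_nhds hx) Ioo_subset_Ico_self)]
    exact (hode x hx).deriv
  intro x hx
  rcases eq_or_lt_of_le hx.1 with h | h
  · -- continuity at 0
    subst h
    have hfilter : nhdsWithin (0:ℝ) (Ico (0:ℝ) (1/100))
        = pure 0 ⊔ nhdsWithin 0 (Ioo (0:ℝ) (1/100)) := by
      conv_lhs => rw [show Ico (0:ℝ) (1/100) = insert 0 (Ioo (0:ℝ) (1/100)) from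
        (Ioo_insert_left (by norm_num)).symm]
      exact nhdsWithin_insert 0 _
    rw [ContinuousWithinAt, hd0, hfilter, tendsto_sup]
    constructor
    · have := tendsto_pure_nhds (derivWithin ψ (Ico (0:ℝ) (1/100))) 0
      rwa [hd0] at this
    · rw [nhdsWithin_Ioo_eq_nhdsGT (by norm_num : (0:ℝ) < 1/100)]
      apply (psi_deriv_tendsto hc hb h0 hslope).congr'
      filter_upwards [Ioo_mem_nhdsGT (by norm_num : (0:ℝ) < 1/100)] with y hy
      exact (hdx y hy).symm
  · -- continuity at interior points
    have hdd := denom_half hx.2.le (hb x)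
    have hdenom : x*(1 - x*ψ x) ≠ 0 := mul_ne_zero (ne_of_gt h) (by linarith)
    have hR : ContinuousAt (fun y => (2*(1 - ψ y) + y * ψ y^2)/(y*(1 - y * ψ y))) x := by
      have h1 : ContinuousAt (fun y => 2*(1 - ψ y) + y * ψ y^2) x :=
        ((continuousAt_const.mul (continuousAt_const.sub hc.continuousAt)).add
          (continuousAt_id.mul (hc.continuousAt.pow 2)))
      have h2 : ContinuousAt (fun y => y*(1 - y * ψ y)) x :=
        continuousAt_id.mul (continuousAt_const.sub
          (continuousAt_id.mul hc.continuousAt))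
      exact h1.div h2 hdenom
    have hev : (fun y => (2*(1 - ψ y) + y * ψ y^2)/(y*(1 - y * ψ y)))
        =ᶠ[nhds x] derivWithin ψ (Ico (0:ℝ) (1/100)) := by
      filter_upwards [isOpen_Ioo.mem_nhds (⟨h, hx.2⟩ : x ∈ Ioo (0:ℝ) (1/100))] with y hy
      exact (hdx y hy).symm
    exact (hR.congr hev).continuousWithinAt

end PsiReg

/-- One-step contraction comparison: two solutions of the integral equation agree. -/
lemma eqOn_of_id {φ₁ φ₂ : ℝ → ℝ} {b : ℝ} (hb0 : 0 ≤ b) (hbc : b ≤ 1/100)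
    (h₁c : ContinuousOn φ₁ (Icc 0 b)) (h₂c : ContinuousOn φ₂ (Icc 0 b))
    (h₁b : ∀ s ∈ Icc 0 b, |φ₁ s - 1| ≤ 1/2) (h₂b : ∀ s ∈ Icc 0 b, |φ₂ s - 1| ≤ 1/2)
    (h₁id : ∀ t ∈ Icc 0 b, φ₁ t = 1 + (∫ s in (0:ℝ)..t, s^2 * gg s (φ₁ s))/t^2)
    (h₂id : ∀ t ∈ Icc 0 b, φ₂ t = 1 + (∫ s in (0:ℝ)..t, s^2 * gg s (φ₂ s))/t^2) :
    EqOn φ₁ φ₂ (Icc 0 b) := by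
  have hne : (Icc (0:ℝ) b).Nonempty := ⟨0, le_refl 0, hb0⟩
  have hcd : ContinuousOn (fun t => |φ₁ t - φ₂ t|) (Icc 0 b) := (h₁c.sub h₂c).abs
  obtain ⟨t₀, ht₀mem, ht₀max⟩ := isCompact_Icc.exists_isMaxOn hne hcd
  set D := |φ₁ t₀ - φ₂ t₀| with hD
  have hDmax : ∀ s ∈ Icc (0:ℝ) b, |φ₁ s - φ₂ s| ≤ D := fun s hs => ht₀max hs
  have hclaim : D ≤ (8/100) * D := by
    rcases eq_or_lt_of_le ht₀mem.1 with h | h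
    · have e1 : φ₁ t₀ = 1 := by have := h₁id t₀ ht₀mem; rw [← h] at this ⊢; simpa using this
      have e2 : φ₂ t₀ = 1 := by have := h₂id t₀ ht₀mem; rw [← h] at this ⊢; simpa using this
      simp [hD, e1, e2]
    · -- t₀ > 0
      have hsub : Icc (0:ℝ) t₀ ⊆ Icc 0 b := Icc_subset_Icc le_rfl ht₀mem.2
      have hG₁ : IntervalIntegrable (fun s => s^2 * gg s (φ₁ s)) volume 0 t₀ := by
        rw [intervalIntegrable_iff_integrableOn_Icc_of_le h.le]
        exact (((G_contOn h₁c h₁b hbc).mono hsub)).integrableOn_compact isCompact_Icc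
      have hG₂ : IntervalIntegrable (fun s => s^2 * gg s (φ₂ s)) volume 0 t₀ := by
        rw [intervalIntegrable_iff_integrableOn_Icc_of_le h.le]
        exact (((G_contOn h₂c h₂b hbc).mono hsub)).integrableOn_compact isCompact_Icc
      have hIb : |(∫ s in (0:ℝ)..t₀, s^2 * gg s (φ₁ s))
          - ∫ s in (0:ℝ)..t₀, s^2 * gg s (φ₂ s)| ≤ 8 * t₀^2 * D * t₀ := by
        rw [← intervalIntegral.integral_sub hG₁ hG₂]
        have := intervalIntegral.norm_integral_le_of_norm_le_const (C := 8 * t₀^2 * D)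
          (f := fun s => s^2 * gg s (φ₁ s) - s^2 * gg s (φ₂ s)) (a := 0) (b := t₀) ?_
        · simpa [abs_of_nonneg h.le] using this
        · intro x hx
          rw [uIoc_of_le h.le] at hx
          have hx0 : (0:ℝ) ≤ x := hx.1.le
          have hxt : x ≤ t₀ := hx.2
          have hxb : x ∈ Icc (0:ℝ) b := ⟨hx0, le_trans hxt ht₀mem.2⟩
          have hl := gg_lip hx0 (le_trans hxb.2 hbc) (h₁b x hxb) (h₂b x hxb)
          have hDx := hDmax x hxb
          have hD0 : 0 ≤ D := le_trans (abs_nonneg _) hDx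
          have hbeta : (fun s => s^2 * gg s (φ₁ s) - s^2 * gg s (φ₂ s)) x
              = x^2 * (gg x (φ₁ x) - gg x (φ₂ x)) := by simp only []; ring
          rw [Real.norm_eq_abs, ← mul_sub, abs_mul, abs_of_nonneg (sq_nonneg x)]
          calc x^2 * |gg x (φ₁ x) - gg x (φ₂ x)| ≤ t₀^2 * (8 * D) := by
                apply mul_le_mul (by nlinarith) (le_trans hl (by nlinarith))
                  (abs_nonneg _) (sq_nonneg t₀)
            _ = 8 * t₀^2 * D := by ring
      have ht₀c : t₀ ≤ 1/100 := le_trans ht₀mem.2 hbc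
      have hD0 : 0 ≤ D := abs_nonneg _
      have ht2 : (0:ℝ) < t₀^2 := by positivity
      have hvD : D * t₀^2 = |(∫ s in (0:ℝ)..t₀, s^2 * gg s (φ₁ s))
          - ∫ s in (0:ℝ)..t₀, s^2 * gg s (φ₂ s)| := by
        rw [hD, h₁id t₀ ht₀mem, h₂id t₀ ht₀mem, add_sub_add_left_eq_sub, div_sub_div_same,
          abs_div, abs_of_nonneg (sq_nonneg t₀), div_mul_cancel₀ _ (ne_of_gt ht2)]
      have hstep : D * t₀^2 ≤ (8/100*D) * t₀^2 := by
        rw [hvD]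
        nlinarith [mul_le_mul_of_nonneg_right ht₀c
          (by positivity : (0:ℝ) ≤ 8 * t₀^2 * D)]
      exact le_of_mul_le_mul_right hstep ht2
  have hD0 : D = 0 := le_antisymm (by linarith) (abs_nonneg _)
  intro t ht
  have := hDmax t ht
  rw [hD0] at this
  have := abs_nonpos_iff.mp (le_trans this (le_refl 0))
  linarith [sub_eq_zero.mp this]

set_option maxHeartbeats 1000000 in
/-- A C¹ solution of the singular ODE satisfies the integral equation. -/
lemma ode_to_id {φ : ℝ → ℝ} {t : ℝ} (ht : 0 < t) (htc : t ≤ 1/100)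
    (hcφ : ContinuousOn φ (Icc 0 t)) (h0 : φ 0 = 1)
    (hball : ∀ s ∈ Icc 0 t, |φ s - 1| ≤ 1/2)
    (hd : ∀ s ∈ Ioc (0:ℝ) t,
      HasDerivAt φ ((2*(1 - φ s) + s * φ s^2)/(s*(1 - s * φ s))) s) :
    φ t = 1 + (∫ s in (0:ℝ)..t, s^2 * gg s (φ s))/t^2 := by
  set G : ℝ → ℝ := fun s => s^2 * gg s (φ s) with hG
  have hGc : ContinuousOn G (Icc 0 t) := G_contOn hcφ hball htc
  have hGint : ∀ u ∈ Icc (0:ℝ) t, IntervalIntegrable G volume 0 u := by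
    intro u hu
    rw [intervalIntegrable_iff_integrableOn_Icc_of_le hu.1]
    exact (hGc.mono (Icc_subset_Icc le_rfl hu.2)).integrableOn_compact isCompact_Icc
  -- derivative of s^2 (φ s - 1)
  have hder : ∀ s ∈ Ioc (0:ℝ) t, HasDerivAt (fun u => u^2*(φ u - 1)) (G s) s := by
    intro s hs
    have hs0 : 0 < s := hs.1
    have h1 := (hasDerivAt_pow 2 s).mul ((hd s hs).sub_const 1)
    refine h1.congr_deriv ?_
    have hdd : (1:ℝ)/2 ≤ 1 - s * φ s := denom_half (le_trans hs.2 htc) (hball s ⟨hs0.le, hs.2⟩)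
    have hdd0 : (1:ℝ) - s * φ s ≠ 0 := by linarith
    rw [hG]
    simp only [gg, Nat.cast_ofNat, pow_one]
    have hsne : s ≠ 0 := hs0.ne'
    norm_num
    field_simp
    ring
  -- FTC on [e, t]
  have hfund : ∀ e ∈ Ioo (0:ℝ) t,
      (∫ s in e..t, G s) = t^2*(φ t - 1) - e^2*(φ e - 1) := by
    intro e he
    apply intervalIntegral.integral_eq_sub_of_hasDerivAt
    · intro x hx
      rw [uIcc_of_le he.2.le] at hx
      exact hder x ⟨lt_of_lt_of_le he.1 hx.1, hx.2⟩
    · rw [intervalIntegrable_iff_integrableOn_Icc_of_le he.2.le]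
      exact (hGc.mono (Icc_subset_Icc he.1.le le_rfl)).integrableOn_compact isCompact_Icc
  -- constancy
  have hkey : ∀ e ∈ Ioo (0:ℝ) t,
      t^2*(φ t - 1) - (∫ s in (0:ℝ)..t, G s) = e^2*(φ e - 1) - ∫ s in (0:ℝ)..e, G s := by
    intro e he
    have hsplit : (∫ s in (0:ℝ)..e, G s) + (∫ s in e..t, G s) = ∫ s in (0:ℝ)..t, G s :=
      intervalIntegral.integral_add_adjacent_intervals
        (hGint e ⟨he.1.le, he.2.le⟩)
        (by
          rw [intervalIntegrable_iff_integrableOn_Icc_of_le he.2.le]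
          exact (hGc.mono (Icc_subset_Icc he.1.le le_rfl)).integrableOn_compact isCompact_Icc)
    have := hfund e he
    linarith
  -- the right-hand side tends to 0 as e → 0⁺
  have hto : Tendsto (fun e => e^2*(φ e - 1) - ∫ s in (0:ℝ)..e, G s)
      (nhdsWithin 0 (Ioo (0:ℝ) t)) (nhds 0) := by
    have hup : Tendsto (fun e : ℝ => 3*e) (nhdsWithin 0 (Ioo (0:ℝ) t)) (nhds 0) := by
      have : Tendsto (fun e : ℝ => 3*e) (nhds 0) (nhds (3*0)) :=
        Continuous.tendsto (by continuity) 0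
      simpa using this.mono_left nhdsWithin_le_nhds
    have hlo : Tendsto (fun e : ℝ => -(3*e)) (nhdsWithin 0 (Ioo (0:ℝ) t)) (nhds 0) := by
      have : Tendsto (fun e : ℝ => -(3*e)) (nhds 0) (nhds (-(3*0))) :=
        Continuous.tendsto (by continuity) 0
      simpa using this.mono_left nhdsWithin_le_nhds
    apply tendsto_of_tendsto_of_tendsto_of_le_of_le' hlo hup
    all_goals
      filter_upwards [self_mem_nhdsWithin] with e he
      have he0 : 0 < e := he.1
      have het : e ≤ t := he.2.le
      have hec : e ≤ 1/100 := le_trans het htc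
      have hb1 : |φ e - 1| ≤ 1/2 := hball e ⟨he0.le, het⟩
      have hIb : |∫ s in (0:ℝ)..e, G s| ≤ 2*e^2*e := by
        have := intervalIntegral.norm_integral_le_of_norm_le_const (C := 2*e^2)
          (f := G) (a := 0) (b := e) ?_
        · simpa [abs_of_pos he0] using this
        · intro x hx
          rw [uIoc_of_le he0.le] at hx
          have hx2 : x^2 ≤ e^2 := by nlinarith [hx.1.le, hx.2]
          have hgb : |gg x (φ x)| ≤ 2 :=
            gg_bound (le_trans hx.2 hec) (hball x ⟨hx.1.le, le_trans hx.2 het⟩)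
          rw [hG, Real.norm_eq_abs, abs_mul, abs_of_nonneg (sq_nonneg x)]
          calc x^2 * |gg x (φ x)| ≤ e^2 * 2 :=
                mul_le_mul hx2 hgb (abs_nonneg _) (sq_nonneg e)
            _ = 2*e^2 := by ring
      have habs : |e^2*(φ e - 1)| ≤ e^2/2 := by
        rw [abs_mul, abs_of_nonneg (sq_nonneg e)]
        nlinarith [sq_nonneg e]
      have h1 := abs_le.1 hIb
      have h2 := abs_le.1 habs
      have he2 : e^2 ≤ e * (1/100) := by
        rw [pow_two]; exact mul_le_mul_of_nonneg_left hec he0.le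
      have he3 : e^2 * e ≤ e^2 * (1/100) := mul_le_mul_of_nonneg_left hec (sq_nonneg e)
      linarith [h1.1, h1.2, h2.1, h2.2, he2, he3]
  -- conclude the constant is 0
  haveI : (nhdsWithin (0:ℝ) (Ioo (0:ℝ) t)).NeBot := by
    apply mem_closure_iff_nhdsWithin_neBot.mp
    rw [closure_Ioo (ne_of_lt ht)]
    exact ⟨le_refl 0, ht.le⟩
  have hconst : Tendsto (fun _ : ℝ => t^2*(φ t - 1) - ∫ s in (0:ℝ)..t, G s)
      (nhdsWithin 0 (Ioo (0:ℝ) t)) (nhds (t^2*(φ t - 1) - ∫ s in (0:ℝ)..t, G s)) :=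
    tendsto_const_nhds
  have hzero : t^2*(φ t - 1) - (∫ s in (0:ℝ)..t, G s) = 0 := by
    apply tendsto_nhds_unique _ hto
    apply hconst.congr'
    filter_upwards [self_mem_nhdsWithin] with e he
    exact hkey e he
  have ht2 : (t:ℝ)^2 ≠ 0 := by positivity
  field_simp
  linarith

section PsiUniq
variable {ψ ψ' : ℝ → ℝ} (hc : Continuous ψ) (hb : ∀ s, |ψ s - 1| ≤ 1/2)
  (hid : ∀ ζ ∈ Icc (0:ℝ) (1/100),
    ψ ζ = 1 + (∫ s in (0:ℝ)..ζ, s^2 * gg s (ψ s)) / ζ^2)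
  (hsm : ∀ ζ ∈ Icc (0:ℝ) (1/100), |ψ ζ - 1| ≤ 2 * ζ)
  (hz : ψ 0 = 1)
  (hc' : ContinuousOn ψ' (Ico (0:ℝ) (1/100))) (h0' : ψ' 0 = 1)
  (hode' : ∀ ζ ∈ Ioo (0:ℝ) (1/100),
    HasDerivAt ψ' ((2*(1 - ψ' ζ) + ζ * ψ' ζ^2)/(ζ*(1 - ζ * ψ' ζ))) ζ)

include hc hb hid hc' h0' hode' in
lemma eq_upto {t : ℝ} (ht0 : 0 < t) (htc : t < 1/100)
    (hball' : ∀ s ∈ Icc 0 t, |ψ' s - 1| ≤ 1/2) : EqOn ψ ψ' (Icc 0 t) := by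
  have hsub : Icc (0:ℝ) t ⊆ Ico (0:ℝ) (1/100) := fun s hs => ⟨hs.1, lt_of_le_of_lt hs.2 htc⟩
  have hsub' : Icc (0:ℝ) t ⊆ Icc (0:ℝ) (1/100) := fun s hs => ⟨hs.1, le_trans hs.2 htc.le⟩
  apply eqOn_of_id ht0.le htc.le hc.continuousOn (hc'.mono hsub)
    (fun s _ => hb s) hball' (fun u hu => hid u (hsub' hu))
  intro u hu
  rcases eq_or_lt_of_le hu.1 with h | h
  · rw [← h]; simpa using h0'
  · apply ode_to_id h (le_trans hu.2 htc.le)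
      (hc'.mono (fun s hs => hsub ⟨hs.1, le_trans hs.2 hu.2⟩)) h0'
      (fun s hs => hball' s ⟨hs.1, le_trans hs.2 hu.2⟩)
    intro s hs
    exact hode' s ⟨hs.1, lt_of_le_of_lt (le_trans hs.2 hu.2) htc⟩

include hc hb hid hsm hz hc' h0' hode' in
lemma psi_unique : EqOn ψ ψ' (Ico (0:ℝ) (1/100)) := by
  -- first show ψ' stays in the ball on all of [0, 1/100)
  have hballall : ∀ s ∈ Ico (0:ℝ) (1/100), |ψ' s - 1| ≤ 1/2 := by
    by_contra hcon
    push_neg at hcon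
    set Bad : Set ℝ := {s | s ∈ Ico (0:ℝ) (1/100) ∧ 1/2 < |ψ' s - 1|} with hBad
    obtain ⟨t₁, ht₁mem, ht₁⟩ := hcon
    have hne : Bad.Nonempty := ⟨t₁, ht₁mem, ht₁⟩
    have hbdd : BddBelow Bad := ⟨0, fun s hs => hs.1.1⟩
    set T := sInf Bad with hT
    have hT0 : 0 ≤ T := le_csInf hne (fun s hs => hs.1.1)
    have hTlt : T < 1/100 := lt_of_le_of_lt (csInf_le hbdd ⟨ht₁mem, ht₁⟩) ht₁mem.2
    have hTpos : 0 < T := by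
      have h00 : (0:ℝ) ∈ Ico (0:ℝ) (1/100) := ⟨le_refl 0, by norm_num⟩
      have hcw := hc' 0 h00
      rw [Metric.continuousWithinAt_iff] at hcw
      obtain ⟨δ, hδpos, hδ⟩ := hcw (1/2) (by norm_num)
      have hTδ : δ ≤ T := by
        apply le_csInf hne
        intro s hs
        by_contra hlt
        push_neg at hlt
        have := hδ hs.1 (by rw [Real.dist_eq, sub_zero, abs_of_nonneg hs.1.1]; exact hlt)
        rw [Real.dist_eq, h0'] at this
        linarith [hs.2]
      linarith
    have hless : ∀ s, 0 ≤ s → s < T → |ψ' s - 1| ≤ 1/2 := by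
      intro s hs0 hsT
      by_contra hgt
      push_neg at hgt
      have : s ∈ Bad := ⟨⟨hs0, lt_trans hsT hTlt⟩, hgt⟩
      linarith [csInf_le hbdd this]
    have hbelow : ∀ s, 0 ≤ s → s < T → |ψ' s - 1| ≤ 2 * s := by
      intro s hs0 hsT
      rcases eq_or_lt_of_le hs0 with h | h
      · rw [← h, h0']; norm_num
      · have heq := eq_upto hc hb hid hc' h0' hode' h (lt_trans hsT hTlt)
          (fun u hu => hless u hu.1 (lt_of_le_of_lt hu.2 hsT))
        rw [← heq ⟨hs0, le_refl s⟩]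
        exact hsm s ⟨hs0, le_trans (le_of_lt (lt_trans hsT hTlt)) (le_refl _)⟩
    have hTc : ContinuousWithinAt ψ' (Ico (0:ℝ) (1/100)) T := hc' T ⟨hT0, hTlt⟩
    -- limit from the left gives a small value at T
    have hleft : |ψ' T - 1| ≤ 2 * T := by
      have hclosL : T ∈ closure (Ico (0:ℝ) T) := by
        rw [closure_Ico (ne_of_lt hTpos)]
        exact ⟨hT0, le_refl T⟩
      haveI : (nhdsWithin T (Ico (0:ℝ) T)).NeBot := mem_closure_iff_nhdsWithin_neBot.mp hclosL
      have htl : Tendsto (fun x => |ψ' x - 1|) (nhdsWithin T (Ico (0:ℝ) T))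
          (nhds (|ψ' T - 1|)) :=
        (Tendsto.sub_const (hTc.mono (Ico_subset_Ico_right hTlt.le)) 1).abs
      apply le_of_tendsto htl
      filter_upwards [self_mem_nhdsWithin] with s hs
      linarith [hbelow s hs.1 hs.2, hs.2.le]
    -- limit from the right gives a large value at T
    have hright : 1/2 ≤ |ψ' T - 1| := by
      have hclosR : T ∈ closure Bad := csInf_mem_closure hne hbdd
      haveI : (nhdsWithin T Bad).NeBot := mem_closure_iff_nhdsWithin_neBot.mp hclosR
      have htr : Tendsto (fun x => |ψ' x - 1|) (nhdsWithin T Bad) (nhds (|ψ' T - 1|)) :=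
        (Tendsto.sub_const (hTc.mono (fun s hs => hs.1)) 1).abs
      apply ge_of_tendsto htr
      filter_upwards [self_mem_nhdsWithin] with s hs
      exact hs.2.le
    linarith
  -- now conclude
  intro t ht
  rcases eq_or_lt_of_le ht.1 with h | h
  · rw [← h, hz, h0']
  · exact eq_upto hc hb hid hc' h0' hode' h ht.2
      (fun u hu => hballall u ⟨hu.1, lt_of_le_of_lt hu.2 ht.2⟩) ⟨h.le, le_refl t⟩

end PsiUniq
end ODEconstruction
end UnstableManifoldODE

open Set Filter

/-- There exist `ζ₀ > 0` and a unique `C¹` function `ψ` on `[0, ζ₀)` with `ψ(0) = 1`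
solving `dψ/dζ = (2(1-ψ) + ζψ²)/(ζ(1 - ζψ))` on `(0, ζ₀)`; moreover
`ψ(ζ) = 1 + ζ/3 + o(ζ)` as `ζ → 0⁺`. -/
theorem unstable_manifold_ODE_solution :
    ∃ ζ₀ : ℝ, 0 < ζ₀ ∧ ∃ ψ : ℝ → ℝ,
      ContDiffOn ℝ 1 ψ (Ico 0 ζ₀) ∧ ψ 0 = 1 ∧
      (∀ ζ ∈ Ioo 0 ζ₀, HasDerivAt ψ
        ((2 * (1 - ψ ζ) + ζ * ψ ζ ^ 2) / (ζ * (1 - ζ * ψ ζ))) ζ) ∧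
      Tendsto (fun ζ => (ψ ζ - 1 - ζ / 3) / ζ) (nhdsWithin 0 (Ioi 0)) (nhds 0) ∧
      ∀ ψ' : ℝ → ℝ, ContDiffOn ℝ 1 ψ' (Ico 0 ζ₀) → ψ' 0 = 1 →
        (∀ ζ ∈ Ioo 0 ζ₀, HasDerivAt ψ'
          ((2 * (1 - ψ' ζ) + ζ * ψ' ζ ^ 2) / (ζ * (1 - ζ * ψ' ζ))) ζ) →
        EqOn ψ ψ' (Ico 0 ζ₀) := by
  obtain ⟨ψ, hc, hb, hid⟩ := exists_psi
  have hz : ψ 0 = 1 := psi_zero hid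
  have hslope := psi_slope hc hb hid
  have hode := psi_ode hc hb hid
  have hsm := psi_small hb hid
  refine ⟨1/100, by norm_num, ψ, psi_contDiff hc hb hz hslope hode, hz, hode, ?_, ?_⟩
  · have h1 : Tendsto (fun ζ => (ψ ζ - 1)/ζ - 1/3) (nhdsWithin 0 (Ioi 0))
        (nhds (1/3 - 1/3)) := hslope.sub tendsto_const_nhds
    rw [sub_self] at h1
    apply h1.congr'
    filter_upwards [self_mem_nhdsWithin] with x hx
    have hx0 : x ≠ 0 := ne_of_gt hx
    rw [eq_div_iff hx0, sub_mul, div_mul_cancel₀ _ hx0]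
    ring
  · intro ψ' h1 h2 h3
    exact psi_unique hc hb hid hsm hz h1.continuousOn h2 h3
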